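/- Suppose P : ℕ → ℕ → ℕ (written P_B(n)) is a family of non-decreasing functions satisfying: (0) P_{B+1}(n) ≥ P_B(n) for n ≥ 1; (1) P_B(n) ≥ 3 for n ≥ 1; (2) P_B(n_1+⋯+n_m) ≥ P_{C_1}(n_1)+⋯+P_{C_m}(n_m)+1 whenever m ≥ 2, C_1+⋯+C_m = B, each n_i ≥ 1; (4) P_B(n+1) ≥ P_B(n)+1 for n ≥ 1; (5) P_B(n_1+⋯+n_m) ≥ P_{C_1}(n_1)⋯P_{C_m}(n_m)+3 whenever C_1+⋯+C_m = B−m+1, B ≥ m−1 ≥ 1, each n_i ≥ 1. Then the family P_B(n) = max(3, n^(6(B+1))) satisfies all these conditions. -/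

import Mathlib

def P (B n : ℕ) : ℕ := max 3 (n ^ (6 * (B + 1)))

lemma key1 (a e : ℕ) (ha : 1 ≤ a) (he : 1 ≤ e) : a ^ e + e ≤ (a + 1) ^ e := by
  induction e with
  | zero => simp
  | succ k ih =>
    rcases Nat.eq_zero_or_pos k with rfl | hk
    · simp
    · have h1 := ih hk
      have h2 : 1 ≤ a ^ k := Nat.one_le_pow _ _ ha
      calc a ^ (k + 1) + (k + 1)
          ≤ (a ^ k + k) * (a + 1) := by
            rw [pow_succ]; nlinarith
        _ ≤ (a + 1) ^ k * (a + 1) := Nat.mul_le_mul_right _ h1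
        _ = (a + 1) ^ (k + 1) := (pow_succ _ _).symm

lemma key2 (a b E : ℕ) (ha : 1 ≤ a) (hb : 1 ≤ b) (hE : 2 ≤ E) :
    a ^ E + b ^ E + E ≤ (a + b) ^ E := by
  induction E with
  | zero => omega
  | succ k ih =>
    rcases Nat.lt_or_ge k 2 with hk | hk
    · interval_cases k
      · omega
      · have hab : 1 ≤ a * b := Nat.one_le_iff_ne_zero.mpr (by positivity)
        have hexp : (a + b) ^ (1 + 1) = a ^ (1 + 1) + 2 * (a * b) + b ^ (1 + 1) := by ring
        omega
    · have h1 := ih hk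
      have h2 : 1 ≤ a ^ k := Nat.one_le_pow _ _ ha
      have h3 : 1 ≤ b ^ k := Nat.one_le_pow _ _ hb
      calc a ^ (k + 1) + b ^ (k + 1) + (k + 1)
          ≤ (a ^ k + b ^ k + k) * (a + b) := by
            rw [pow_succ, pow_succ]; nlinarith
        _ ≤ (a + b) ^ k * (a + b) := Nat.mul_le_mul_right _ h1
        _ = (a + b) ^ (k + 1) := (pow_succ _ _).symm

lemma sum_pow (E : ℕ) (hE : 2 ≤ E) : ∀ (m : ℕ) (n : Fin m → ℕ), (∀ i, 1 ≤ n i) →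
    (∑ i, n i ^ E) + (m - 1) * E ≤ (∑ i, n i) ^ E := by
  intro m
  induction m with
  | zero => simp
  | succ k ih =>
    intro n hn
    rw [Fin.sum_univ_succ (fun i => n i ^ E), Fin.sum_univ_succ n]
    rcases Nat.eq_zero_or_pos k with rfl | hk
    · simp
    · have ihk := ih (fun i => n i.succ) (fun i => hn _)
      have hS1 : 1 ≤ ∑ i : Fin k, n i.succ :=
        le_trans (hn (⟨0, hk⟩ : Fin k).succ)
          (Finset.single_le_sum (f := fun i : Fin k => n i.succ)
            (fun i _ => Nat.zero_le _) (Finset.mem_univ (⟨0, hk⟩ : Fin k)))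
      have hkey := key2 (n 0) (∑ i : Fin k, n i.succ) E (hn 0) hS1 hE
      have hkE : (k + 1 - 1) * E = (k - 1) * E + E := by
        rw [show k + 1 - 1 = (k - 1) + 1 from by omega]; ring
      rw [hkE]
      linarith

theorem stmt6 :
    (∀ B : ℕ, Monotone (P B)) ∧
    (∀ B n : ℕ, 1 ≤ n → P B n ≤ P (B + 1) n) ∧
    (∀ B n : ℕ, 1 ≤ n → 3 ≤ P B n) ∧
    (∀ (m B : ℕ) (C n : Fin m → ℕ), 2 ≤ m → (∑ i, C i) = B → (∀ i, 1 ≤ n i) →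
      (∑ i, P (C i) (n i)) + 1 ≤ P B (∑ i, n i)) ∧
    (∀ B n : ℕ, 1 ≤ n → P B n + 1 ≤ P B (n + 1)) ∧
    (∀ (m B : ℕ) (C n : Fin m → ℕ), 2 ≤ m → m - 1 ≤ B → (∑ i, C i) + m = B + 1 →
      (∀ i, 1 ≤ n i) → (∏ i, P (C i) (n i)) + 3 ≤ P B (∑ i, n i)) := by
  refine ⟨?_, ?_, ?_, ?_, ?_, ?_⟩
  · intro B a b hab
    exact max_le_max le_rfl (Nat.pow_le_pow_left hab _)
  · intro B n hn
    exact max_le_max le_rfl (Nat.pow_le_pow_right hn (by omega))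
  · intro B n _
    exact le_max_left _ _
  · -- superadditivity
    intro m B C n hm hC hn
    have hE : 6 ≤ 6 * (B + 1) := by omega
    have step1 : ∀ i, P (C i) (n i) ≤ n i ^ (6 * (B + 1)) + 2 := by
      intro i
      have hCi : C i ≤ B := by
        rw [← hC]
        exact Finset.single_le_sum (f := C) (fun i _ => Nat.zero_le _) (Finset.mem_univ i)
      have h1 : n i ^ (6 * (C i + 1)) ≤ n i ^ (6 * (B + 1)) :=
        Nat.pow_le_pow_right (hn i) (by omega)
      have h2 : 1 ≤ n i ^ (6 * (B + 1)) := Nat.one_le_pow _ _ (hn i)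
      exact max_le (by omega) (by omega)
    have sum1 : ∑ i, P (C i) (n i) ≤ (∑ i, n i ^ (6 * (B + 1))) + 2 * m := by
      calc ∑ i, P (C i) (n i) ≤ ∑ i, (n i ^ (6 * (B + 1)) + 2) :=
            Finset.sum_le_sum (fun i _ => step1 i)
        _ = (∑ i, n i ^ (6 * (B + 1))) + 2 * m := by
            rw [Finset.sum_add_distrib]
            simp [Finset.card_univ, mul_comm]
    have sum2 := sum_pow (6 * (B + 1)) (by omega) m n hn
    have hm1 : 2 * m + 1 ≤ (m - 1) * (6 * (B + 1)) := by
      calc 2 * m + 1 ≤ (m - 1) * 6 := by omega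
        _ ≤ (m - 1) * (6 * (B + 1)) := Nat.mul_le_mul_left _ hE
    have final : (∑ i, n i) ^ (6 * (B + 1)) ≤ P B (∑ i, n i) := le_max_right _ _
    linarith
  · -- successor
    intro B n hn
    have hE : 6 ≤ 6 * (B + 1) := by omega
    have h2 : 1 ≤ n ^ (6 * (B + 1)) := Nat.one_le_pow _ _ hn
    have hkey := key1 n (6 * (B + 1)) hn (by omega)
    have hmax : P B n ≤ n ^ (6 * (B + 1)) + 2 := max_le (by omega) (by omega)
    have hfin : (n + 1) ^ (6 * (B + 1)) ≤ P B (n + 1) := le_max_right _ _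
    linarith
  · -- supermultiplicativity
    intro m B C n hm hB hsum hn
    set N := ∑ i, n i with hN
    have hNm : m ≤ N := by
      calc m = ∑ _i : Fin m, 1 := by simp
        _ ≤ N := Finset.sum_le_sum (fun i _ => hn i)
    by_cases hone : ∀ i, n i = 1
    · have hNm' : N = m := by rw [hN]; simp [hone]
      have hprod : ∏ i, P (C i) (n i) = 3 ^ m := by
        simp [P, hone, Finset.card_univ]
      rw [hprod, hNm']
      have h1 : (3:ℕ) ^ m ≤ 4 ^ m := Nat.pow_le_pow_left (by norm_num) m
      have h2 : 1 ≤ (4:ℕ) ^ m := Nat.one_le_pow _ _ (by norm_num)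
      calc 3 ^ m + 3 ≤ 2 ^ (2 * m + 2) := by
            have h3 : (2:ℕ) ^ (2 * m + 2) = 4 * 4 ^ m := by
              rw [pow_add, pow_mul]; norm_num; ring
            rw [h3]; linarith
        _ ≤ 2 ^ (6 * m) := Nat.pow_le_pow_right (by norm_num) (by omega)
        _ ≤ m ^ (6 * m) := Nat.pow_le_pow_left hm _
        _ ≤ m ^ (6 * (B + 1)) := Nat.pow_le_pow_right (by omega) (by omega)
        _ ≤ P B m := le_max_right _ _
    · push_neg at hone
      obtain ⟨j, hj⟩ := hone
      have hj2 : 2 ≤ n j := by have := hn j; omega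
      have hrest : (∑ i ∈ Finset.univ.erase j, n i) + n j = N := by
        rw [hN]; exact Finset.sum_erase_add _ _ (Finset.mem_univ j)
      have hcard : (Finset.univ.erase j).card = m - 1 := by
        rw [Finset.card_erase_of_mem (Finset.mem_univ j)]
        simp [Finset.card_univ]
      have hrest1 : m - 1 ≤ ∑ i ∈ Finset.univ.erase j, n i := by
        calc m - 1 = ∑ _i ∈ Finset.univ.erase j, 1 := by
              rw [Finset.sum_const, hcard]; simp
          _ ≤ _ := Finset.sum_le_sum (fun i _ => hn i)
      have hm1 : 1 ≤ m - 1 := by omega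
      have hN3 : 3 ≤ N := by omega
      have hjN : n j + 1 ≤ N := by omega
      obtain ⟨M, hM⟩ : ∃ M, N = M + 1 := ⟨N - 1, by omega⟩
      have hM2 : 2 ≤ M := by omega
      have hesum : ∑ i, 6 * (C i + 1) = 6 * (B + 1) := by
        have h : ∑ i, 6 * (C i + 1) = 6 * ((∑ i, C i) + m) := by
          rw [← Finset.mul_sum, Finset.sum_add_distrib]
          simp [Finset.card_univ]
        rw [h, hsum]
      have hEeq : 6 * (C j + 1) + (∑ i ∈ Finset.univ.erase j, 6 * (C i + 1))
          = 6 * (B + 1) := by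
        rw [Finset.add_sum_erase Finset.univ (fun i => 6 * (C i + 1)) (Finset.mem_univ j),
          hesum]
      have hsplit : ∏ i, P (C i) (n i)
          = P (C j) (n j) * ∏ i ∈ Finset.univ.erase j, P (C i) (n i) :=
        (Finset.mul_prod_erase _ _ (Finset.mem_univ j)).symm
      have hbound_rest : ∏ i ∈ Finset.univ.erase j, P (C i) (n i)
          ≤ N ^ (∑ i ∈ Finset.univ.erase j, 6 * (C i + 1)) := by
        rw [← Finset.prod_pow_eq_pow_sum]
        refine Finset.prod_le_prod' (fun i _ => ?_)
        have hni : n i ≤ N :=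
          Finset.single_le_sum (f := n) (fun i _ => Nat.zero_le _) (Finset.mem_univ i)
        refine max_le ?_ (Nat.pow_le_pow_left hni _)
        exact le_trans hN3 (Nat.le_self_pow (by positivity) N)
      have hbj : P (C j) (n j) ≤ M ^ (6 * (C j + 1)) := by
        refine max_le ?_ ?_
        · calc (3:ℕ) ≤ 2 ^ 2 := by norm_num
            _ ≤ 2 ^ (6 * (C j + 1)) := Nat.pow_le_pow_right (by norm_num) (by omega)
            _ ≤ M ^ (6 * (C j + 1)) := Nat.pow_le_pow_left hM2 _
        · exact Nat.pow_le_pow_left (by omega) _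
      have hkey := key1 M (6 * (C j + 1)) (by omega) (by omega)
      have hNR1 : 1 ≤ N ^ (∑ i ∈ Finset.univ.erase j, 6 * (C i + 1)) :=
        Nat.one_le_pow _ _ (by omega)
      have hprodle : ∏ i, P (C i) (n i)
          ≤ M ^ (6 * (C j + 1)) * N ^ (∑ i ∈ Finset.univ.erase j, 6 * (C i + 1)) := by
        rw [hsplit]
        exact Nat.mul_le_mul hbj hbound_rest
      have hstep : M ^ (6 * (C j + 1)) * N ^ (∑ i ∈ Finset.univ.erase j, 6 * (C i + 1)) + 3
          ≤ N ^ (6 * (B + 1)) := by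
        have h6 : M ^ (6 * (C j + 1)) + 6 ≤ N ^ (6 * (C j + 1)) := by
          rw [hM]; omega
        calc M ^ (6 * (C j + 1)) * N ^ (∑ i ∈ Finset.univ.erase j, 6 * (C i + 1)) + 3
            ≤ (M ^ (6 * (C j + 1)) + 6) * N ^ (∑ i ∈ Finset.univ.erase j, 6 * (C i + 1)) := by
              nlinarith
          _ ≤ N ^ (6 * (C j + 1)) * N ^ (∑ i ∈ Finset.univ.erase j, 6 * (C i + 1)) :=
              Nat.mul_le_mul_right _ h6
          _ = N ^ (6 * (C j + 1) + ∑ i ∈ Finset.univ.erase j, 6 * (C i + 1)) :=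
              (pow_add _ _ _).symm
          _ = N ^ (6 * (B + 1)) := by rw [hEeq]
      have hfin : N ^ (6 * (B + 1)) ≤ P B N := le_max_right _ _
      linarith
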